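/- Let n ≥ 1 and let k be an integer with 0 < k < n. Let x ∈ ℝⁿ have pairwise distinct coordinates, and for each τ > 0 let y*(τ) be the unique minimizer of −xᵀy − τ·H_b(y) over {y ∈ ℝⁿ : 0 < yᵢ < 1 for all i, Σᵢ yᵢ = k}. Then as τ → 0⁺, y*(τ)ᵢ → 1 for every index i whose coordinate xᵢ is among the k largest coordinates of x, and y*(τ)ᵢ → 0 for every other index i. In other words, the temperature-scaled LML projection approaches the hard top-k operation as τ → 0⁺. -/

import Mathlib

open Finset Filter

/-- The binary entropy function `H_b(y) = -∑ i, [y i log (y i) + (1 - y i) log (1 - y i)]`. -/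
noncomputable def binEntropy {n : ℕ} (y : Fin n → ℝ) : ℝ :=
  -(∑ i, (y i * Real.log (y i) + (1 - y i) * Real.log (1 - y i)))

lemma binEntropy_eq_sum {n : ℕ} (y : Fin n → ℝ) :
    binEntropy y = ∑ i, Real.binEntropy (y i) := by
  unfold binEntropy
  rw [← Finset.sum_neg_distrib]
  congr 1; funext i
  simp [Real.binEntropy, Real.log_inv]; ring

lemma binEntropy_nonneg' {n : ℕ} {y : Fin n → ℝ} (h : ∀ i, y i ∈ Set.Ioo (0:ℝ) 1) :
    0 ≤ binEntropy y := by
  rw [binEntropy_eq_sum]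
  exact Finset.sum_nonneg fun i _ => Real.binEntropy_nonneg (h i).1.le (h i).2.le

lemma binEntropy_le {n : ℕ} (y : Fin n → ℝ) : binEntropy y ≤ n * Real.log 2 := by
  rw [binEntropy_eq_sum]
  calc ∑ i, Real.binEntropy (y i) ≤ ∑ _i : Fin n, Real.log 2 :=
        Finset.sum_le_sum fun i _ => Real.binEntropy_le_log_two
    _ = n * Real.log 2 := by simp

lemma eps_helper {A M e0 : ℝ} (he0 : 0 < e0) (h : ∀ ε, 0 < ε → ε < e0 → A ≤ ε * M) :
    A ≤ 0 := by
  by_contra hA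
  push_neg at hA
  set ε := min (e0/2) (A / (2 * (|M| + 1))) with hε
  have hMpos : 0 < |M| + 1 := by positivity
  have hεpos : 0 < ε := lt_min (by linarith) (by positivity)
  have hεlt : ε < e0 := (min_le_left _ _).trans_lt (by linarith)
  have h1 : A ≤ ε * M := h ε hεpos hεlt
  have h2 : ε * M ≤ ε * (|M| + 1) := by
    apply mul_le_mul_of_nonneg_left _ hεpos.le
    nlinarith [le_abs_self M]
  have h3 : ε * (|M| + 1) ≤ (A / (2 * (|M| + 1))) * (|M| + 1) := by
    apply mul_le_mul_of_nonneg_right (min_le_right _ _) hMpos.le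
  have h4 : (A / (2 * (|M| + 1))) * (|M| + 1) = A / 2 := by
    field_simp
  linarith

section Rank
variable {n : ℕ} (x : Fin n → ℝ)

/-- rank: number of strictly larger coordinates -/
noncomputable def rnk (i : Fin n) : ℕ := (Finset.univ.filter fun j => x i < x j).card

lemma rnk_lt_of_lt {i j : Fin n} (hij : x i < x j) : rnk x j < rnk x i := by
  apply Finset.card_lt_card
  rw [Finset.ssubset_iff_of_subset]
  · exact ⟨j, by simp [hij], by simp⟩
  · intro l hl
    simp only [Finset.mem_filter, Finset.mem_univ, true_and] at hl ⊢
    exact hij.trans hl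

lemma rnk_lt (i : Fin n) : rnk x i < n := by
  rw [rnk]
  have h : (Finset.univ.filter fun j => x i < x j) ⊂ Finset.univ := by
    rw [Finset.ssubset_univ_iff]
    intro h
    have : i ∈ Finset.univ.filter fun j => x i < x j := by
      rw [h]; exact Finset.mem_univ i
    simp at this
  have := Finset.card_lt_card h
  simpa using this

variable (hdist : Function.Injective x)
include hdist

lemma rnk_inj : Function.Injective (rnk x) := by
  intro i j hij
  by_contra hne
  rcases lt_trichotomy (x i) (x j) with h | h | h
  · exact absurd hij (rnk_lt_of_lt x h).ne'
  · exact hne (hdist h)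
  · exact absurd hij (rnk_lt_of_lt x h).ne

lemma rnk_image : Finset.univ.image (rnk x) = Finset.range n := by
  apply Finset.eq_of_subset_of_card_le
  · intro m hm
    simp only [Finset.mem_image] at hm
    obtain ⟨i, _, rfl⟩ := hm
    exact Finset.mem_range.mpr (rnk_lt x i)
  · rw [Finset.card_range, Finset.card_image_of_injective _ (rnk_inj x hdist)]
    simp

lemma rnk_card_filter (k : ℕ) (hkn : k ≤ n) :
    (Finset.univ.filter fun i => rnk x i < k).card = k := by
  have h1 : ((Finset.univ.filter fun i => rnk x i < k).image (rnk x)).card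
      = (Finset.univ.filter fun i => rnk x i < k).card :=
    Finset.card_image_of_injective _ (rnk_inj x hdist)
  rw [← h1]
  have h2 := (Finset.filter_image (s := Finset.univ) (f := rnk x) (p := fun m => m < k)).symm
  rw [h2, rnk_image x hdist]
  have : (Finset.range n).filter (fun m => m < k) = Finset.range k := by
    ext m; simp only [Finset.mem_filter, Finset.mem_range]; omega
  rw [this, Finset.card_range]

lemma rnk_gt_of_lt_rnk {i j : Fin n} (h : rnk x i < rnk x j) : x j < x i := by
  rcases lt_trichotomy (x i) (x j) with h' | h' | h'
  · exact absurd h (rnk_lt_of_lt x h').asymm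
  · exact absurd (hdist h') (by rintro rfl; exact lt_irrefl _ h)
  · exact h'

end Rank

/-- The temperature-scaled LML projection approaches the hard top-`k` operation as
`τ → 0⁺`: if for each `τ > 0`, `y τ` is the unique minimizer of `-⟪x,y⟫ - τ·H_b(y)` over
`{y : 0 < yᵢ < 1, ∑ᵢ yᵢ = k}`, and the coordinates of `x` are pairwise distinct, then as
`τ → 0⁺` the coordinate `y τ i` tends to `1` when `x i` is among the `k` largest
coordinates of `x` (i.e. fewer than `k` coordinates exceed it) and tends to `0`
otherwise. -/
theorem dcem_lml_proj_tendsto_hard_topk (n k : ℕ) (hn : 1 ≤ n)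
    (hk0 : 0 < k) (hkn : k < n) (x : Fin n → ℝ) (hdist : Function.Injective x)
    (y : ℝ → (Fin n → ℝ))
    (hy : ∀ τ : ℝ, 0 < τ →
      (∀ i, y τ i ∈ Set.Ioo (0 : ℝ) 1) ∧ (∑ i, y τ i) = k ∧
      (∀ z : Fin n → ℝ, (∀ i, z i ∈ Set.Ioo (0 : ℝ) 1) → (∑ i, z i) = k → z ≠ y τ →
        -(∑ i, x i * y τ i) - τ * binEntropy (y τ) <
          -(∑ i, x i * z i) - τ * binEntropy z)) :
    ∀ i : Fin n,
      (((Finset.univ.filter fun j => x i < x j).card < k →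
        Tendsto (fun τ => y τ i) (nhdsWithin 0 (Set.Ioi 0)) (nhds 1)) ∧
      (¬ (Finset.univ.filter fun j => x i < x j).card < k →
        Tendsto (fun τ => y τ i) (nhdsWithin 0 (Set.Ioi 0)) (nhds 0))) := by
  classical
  set T : Finset (Fin n) := Finset.univ.filter fun i => rnk x i < k with hTdef
  set U : Finset (Fin n) := Finset.univ.filter fun i => ¬ rnk x i < k with hUdef
  have hTcard : T.card = k := rnk_card_filter x hdist k hkn.le
  have hUcard : U.card = n - k := by
    have := Finset.card_filter_add_card_filter_not
      (s := (Finset.univ : Finset (Fin n))) (p := fun i => rnk x i < k)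
    simp only [Finset.card_univ, Fintype.card_fin] at this
    rw [← hTdef, ← hUdef] at this
    omega
  have hTne : T.Nonempty := Finset.card_pos.mp (by omega)
  have hUne : U.Nonempty := Finset.card_pos.mp (by omega)
  have key : ∀ i ∈ T, ∀ j ∈ U, x j < x i := by
    intro i hi j hj
    rw [hTdef, Finset.mem_filter] at hi
    rw [hUdef, Finset.mem_filter] at hj
    exact rnk_gt_of_lt_rnk x hdist (by omega)
  set a : ℝ := T.inf' hTne x with hadef
  set b : ℝ := U.sup' hUne x with hbdef
  have hba : b < a := by
    rw [hbdef, Finset.sup'_lt_iff]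
    intro j hj
    rw [hadef, Finset.lt_inf'_iff]
    intro i hi
    exact key i hi j hj
  have hδ : (0:ℝ) < a - b := by linarith
  set C : ℝ := n * Real.log 2 with hCdef
  have hC0 : 0 ≤ C := by
    have := Real.log_nonneg (by norm_num : (1:ℝ) ≤ 2)
    positivity
  have hnk : (0:ℝ) < (n:ℝ) - k := by
    have : (k:ℝ) < n := by exact_mod_cast hkn
    linarith
  have hkpos : (0:ℝ) < k := by exact_mod_cast hk0
  have hsplitw : ∀ w : Fin n → ℝ, ∑ i, w i = ∑ i ∈ T, w i + ∑ i ∈ U, w i := by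
    intro w
    rw [hTdef, hUdef]
    exact (Finset.sum_filter_add_sum_filter_not _ _ _).symm
  have hswitch : ∀ τ : ℝ, 0 < τ → ∑ i ∈ T, (1 - y τ i) = ∑ j ∈ U, y τ j := by
    intro τ hτ
    obtain ⟨h01, hsum, -⟩ := hy τ hτ
    have h1 : ∑ i ∈ T, y τ i + ∑ i ∈ U, y τ i = k := by
      rw [← hsplitw (y τ)]; exact hsum
    rw [Finset.sum_sub_distrib, Finset.sum_const, hTcard, nsmul_eq_mul, mul_one]
    linarith
  have hbound : ∀ τ : ℝ, 0 < τ → ∑ j ∈ U, y τ j ≤ τ * C / (a - b) := by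
    intro τ hτ
    obtain ⟨h01, hsum, hmin⟩ := hy τ hτ
    set w : Fin n → ℝ := y τ with hwdef
    have hmin' : ∀ z : Fin n → ℝ, (∀ i, z i ∈ Set.Ioo (0 : ℝ) 1) → (∑ i, z i) = k →
        -(∑ i, x i * w i) - τ * binEntropy w ≤ -(∑ i, x i * z i) - τ * binEntropy z := by
      intro z hz1 hz2
      by_cases hzw : z = y τ
      · subst hzw; exact le_refl _
      · exact (hmin z hz1 hz2 hzw).le
    set s : ℝ := ∑ j ∈ U, w j with hsdef
    have hTw : ∑ i ∈ T, (1 - w i) = s := hswitch τ hτ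
    have e0 : (∑ i ∈ T, x i) - ∑ i, x i * w i
        = ∑ i ∈ T, x i * (1 - w i) - ∑ i ∈ U, x i * w i := by
      rw [hsplitw (fun i => x i * w i)]
      have : ∑ i ∈ T, x i - ∑ i ∈ T, x i * w i = ∑ i ∈ T, x i * (1 - w i) := by
        rw [← Finset.sum_sub_distrib]
        exact Finset.sum_congr rfl fun i _ => by ring
      linarith
    have e1 : a * ∑ i ∈ T, (1 - w i) ≤ ∑ i ∈ T, x i * (1 - w i) := by
      rw [Finset.mul_sum]
      apply Finset.sum_le_sum
      intro i hi
      have hx : a ≤ x i := Finset.inf'_le x hi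
      have hw1 : 0 ≤ 1 - w i := by have := (h01 i).2; linarith
      exact mul_le_mul_of_nonneg_right hx hw1
    have e2 : ∑ i ∈ U, x i * w i ≤ b * s := by
      rw [hsdef, Finset.mul_sum]
      apply Finset.sum_le_sum
      intro i hi
      have hx : x i ≤ b := Finset.le_sup' x hi
      exact mul_le_mul_of_nonneg_right hx (h01 i).1.le
    have hlow : (a - b) * s ≤ (∑ i ∈ T, x i) - ∑ i, x i * w i := by
      rw [e0]
      rw [hTw] at e1
      have hring : (a - b) * s = a * s - b * s := by ring
      linarith
    set M : ℝ := (∑ i ∈ T, x i) - ((k:ℝ) / ((n:ℝ) - k)) * ∑ i ∈ U, x i with hMdef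
    have hcomp : ∀ ε : ℝ, 0 < ε → ε < min 1 (((n:ℝ) - k)/k) →
        (∑ i ∈ T, x i) - ∑ i, x i * w i ≤ ε * M + τ * C := by
      intro ε hε hε2
      have hε1 : ε < 1 := lt_of_lt_of_le hε2 (min_le_left _ _)
      have hεk : (k:ℝ) * ε < (n:ℝ) - k := by
        have h := lt_of_lt_of_le hε2 (min_le_right _ _)
        rw [lt_div_iff₀ hkpos] at h
        linarith
      set z : Fin n → ℝ := fun i => if rnk x i < k then 1 - ε else (k:ℝ) * ε / ((n:ℝ) - k)
        with hzdef
      have hzT : ∀ i ∈ T, z i = 1 - ε := by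
        intro i hi
        rw [hTdef, Finset.mem_filter] at hi
        simp only [hzdef, if_pos hi.2]
      have hzU : ∀ i ∈ U, z i = (k:ℝ) * ε / ((n:ℝ) - k) := by
        intro i hi
        rw [hUdef, Finset.mem_filter] at hi
        simp only [hzdef, if_neg hi.2]
      have hz1 : ∀ i, z i ∈ Set.Ioo (0:ℝ) 1 := by
        intro i
        by_cases h : rnk x i < k
        · have : z i = 1 - ε := hzT i (by rw [hTdef, Finset.mem_filter]; exact ⟨Finset.mem_univ _, h⟩)
          rw [this]
          constructor <;> linarith
        · have : z i = (k:ℝ) * ε / ((n:ℝ) - k) :=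
            hzU i (by rw [hUdef, Finset.mem_filter]; exact ⟨Finset.mem_univ _, h⟩)
          rw [this]
          constructor
          · positivity
          · rw [div_lt_one hnk]; linarith
      have hsumT : ∑ i ∈ T, z i = (k:ℝ) * (1 - ε) := by
        rw [Finset.sum_congr rfl hzT, Finset.sum_const, hTcard, nsmul_eq_mul]
      have hsumU : ∑ i ∈ U, z i = ((n:ℝ) - k) * ((k:ℝ) * ε / ((n:ℝ) - k)) := by
        rw [Finset.sum_congr rfl hzU, Finset.sum_const, hUcard, nsmul_eq_mul]
        congr 1
        push_cast [hkn.le]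
        ring
      have hz2 : ∑ i, z i = k := by
        rw [hsplitw z, hsumT, hsumU]
        field_simp
        ring
      have hU' : ∑ i ∈ U, x i * z i = ((k:ℝ) * ε / ((n:ℝ) - k)) * ∑ i ∈ U, x i := by
        rw [Finset.sum_congr rfl (fun i hi => by rw [hzU i hi]), ← Finset.sum_mul]
        ring
      have hT' : ∑ i ∈ T, x i * z i = (1 - ε) * ∑ i ∈ T, x i := by
        rw [Finset.sum_congr rfl (fun i hi => by rw [hzT i hi]), ← Finset.sum_mul]
        ring
      have hxz : ∑ i, x i * z i = (∑ i ∈ T, x i) - ε * M := by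
        rw [hsplitw (fun i => x i * z i), hT', hU', hMdef]
        ring
      have hobj := hmin' z hz1 hz2
      have hHw : binEntropy w ≤ C := binEntropy_le w
      have hHz : 0 ≤ binEntropy z := binEntropy_nonneg' hz1
      have h1 : ∑ i, x i * z i - ∑ i, x i * w i ≤ τ * C := by
        have m1 : τ * binEntropy w ≤ τ * C := mul_le_mul_of_nonneg_left hHw hτ.le
        have m2 : 0 ≤ τ * binEntropy z := mul_nonneg hτ.le hHz
        linarith
      rw [hxz] at h1
      linarith
    have hA : (∑ i ∈ T, x i) - ∑ i, x i * w i - τ * C ≤ 0 := by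
      apply eps_helper (e0 := min 1 (((n:ℝ) - k)/k)) (M := M)
      · apply lt_min one_pos
        positivity
      · intro ε hε hε2
        have := hcomp ε hε hε2
        linarith
    rw [show (∑ j ∈ U, y τ j ≤ τ * C / (a - b)) = (s ≤ τ * C / (a - b)) from rfl, le_div_iff₀ hδ]
    have hcomm : s * (a - b) = (a - b) * s := mul_comm _ _
    linarith
  have hb0 : Tendsto (fun τ : ℝ => τ * C / (a - b)) (nhdsWithin 0 (Set.Ioi 0)) (nhds 0) := by
    have h1 : Tendsto (fun τ : ℝ => τ * C / (a - b)) (nhds 0) (nhds (0 * C / (a - b))) :=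
      ((continuous_id.mul continuous_const).div_const _).tendsto 0
    rw [zero_mul, zero_div] at h1
    exact h1.mono_left nhdsWithin_le_nhds
  intro i
  constructor
  · intro hi
    have hiT : i ∈ T := by
      rw [hTdef, Finset.mem_filter]
      exact ⟨Finset.mem_univ _, hi⟩
    have h1 : Tendsto (fun τ => 1 - y τ i) (nhdsWithin 0 (Set.Ioi 0)) (nhds 0) := by
      apply squeeze_zero' ?_ ?_ hb0
      · filter_upwards [self_mem_nhdsWithin] with τ hτ
        have := ((hy τ hτ).1 i).2
        linarith
      · filter_upwards [self_mem_nhdsWithin] with τ hτ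
        obtain ⟨h01, -, -⟩ := hy τ hτ
        calc 1 - y τ i ≤ ∑ j ∈ T, (1 - y τ j) := by
              apply Finset.single_le_sum (f := fun j => 1 - y τ j) _ hiT
              intro j _
              show (0:ℝ) ≤ 1 - y τ j
              have := (h01 j).2
              linarith
          _ = ∑ j ∈ U, y τ j := hswitch τ hτ
          _ ≤ τ * C / (a - b) := hbound τ hτ
    have h2 := tendsto_const_nhds (x := (1:ℝ)) (f := nhdsWithin (0:ℝ) (Set.Ioi 0)) |>.sub h1
    simp only [sub_sub_cancel, sub_zero] at h2
    exact h2
  · intro hi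
    have hiU : i ∈ U := by
      rw [hUdef, Finset.mem_filter]
      exact ⟨Finset.mem_univ _, hi⟩
    apply squeeze_zero' ?_ ?_ hb0
    · filter_upwards [self_mem_nhdsWithin] with τ hτ
      exact ((hy τ hτ).1 i).1.le
    · filter_upwards [self_mem_nhdsWithin] with τ hτ
      obtain ⟨h01, -, -⟩ := hy τ hτ
      calc y τ i ≤ ∑ j ∈ U, y τ j :=
            Finset.single_le_sum (f := fun j => y τ j) (fun j _ => (h01 j).1.le) hiU
        _ ≤ τ * C / (a - b) := hbound τ hτ
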